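/- Discrete energy decay for the one-step scheme: given real sequences and the discrete energy Fⁿ = (Φ(cⁿ),1) + (Cn²/2)·a_D(cⁿ,cⁿ) + α₂(Ψ(sⁿ),1) − α₃(Φ(cⁿ),sⁿ) + α₄((cⁿ)², sⁿ), if the scheme identity ⟨Φ₊'(cⁿ)+Φ₋'(cⁿ⁻¹), cⁿ−cⁿ⁻¹⟩ − α₃⟨Φ₊'(cⁿ⁻¹)+Φ₋'(cⁿ), sⁿ(cⁿ−cⁿ⁻¹)⟩ + α₂⟨Ψ'(sⁿ), sⁿ−sⁿ⁻¹⟩ + Cn²·a_D(cⁿ, cⁿ−cⁿ⁻¹) − α₃⟨Φ(cⁿ⁻¹), sⁿ−sⁿ⁻¹⟩ + α₄⟨sⁿ, (cⁿ)²−(cⁿ⁻¹)²⟩ + α₄⟨sⁿ−sⁿ⁻¹, (cⁿ⁻¹)²⟩ ≤ 0 holds, sⁿ ≥ 0 pointwise, a_D is a symmetric positive semidefinite bilinear form, Φ₊ is convex, Φ₋ concave, Ψ convex (all differentiable), and α₃ ≥ 0, then Fⁿ ≤ Fⁿ⁻¹. -/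

import Mathlib

lemma conv_upper {f : ℝ → ℝ} (hc : ConvexOn ℝ Set.univ f) (hd : Differentiable ℝ f)
    (a b : ℝ) : f b - f a ≤ deriv f b * (b - a) := by
  rcases lt_trichotomy a b with h | h | h
  · have := hc.slope_le_deriv (Set.mem_univ a) (Set.mem_univ b) h (hd b)
    rw [slope_def_field, div_le_iff₀ (by linarith)] at this
    linarith
  · simp [h]
  · have := hc.deriv_le_slope (Set.mem_univ b) (Set.mem_univ a) h (hd b)
    rw [slope_def_field, le_div_iff₀ (by linarith)] at this
    nlinarith
lemma conv_lower {f : ℝ → ℝ} (hc : ConvexOn ℝ Set.univ f) (hd : Differentiable ℝ f)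
    (a b : ℝ) : deriv f a * (b - a) ≤ f b - f a := by
  rcases lt_trichotomy a b with h | h | h
  · have := hc.deriv_le_slope (Set.mem_univ a) (Set.mem_univ b) h (hd a)
    rw [slope_def_field, le_div_iff₀ (by linarith)] at this
    linarith
  · simp [h]
  · have := hc.slope_le_deriv (Set.mem_univ b) (Set.mem_univ a) h (hd a)
    rw [slope_def_field, div_le_iff₀ (by linarith)] at this
    nlinarith


theorem discrete_energy_decay {ι : Type*} [Fintype ι]
    (Φp Φm Ψ : ℝ → ℝ)
    (hΦp_conv : ConvexOn ℝ Set.univ Φp) (hΦp_diff : Differentiable ℝ Φp)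
    (hΦm_conc : ConcaveOn ℝ Set.univ Φm) (hΦm_diff : Differentiable ℝ Φm)
    (hΨ_conv : ConvexOn ℝ Set.univ Ψ) (hΨ_diff : Differentiable ℝ Ψ)
    (Φ : ℝ → ℝ) (hΦ : ∀ x, Φ x = Φp x + Φm x)
    (aD : (ι → ℝ) →ₗ[ℝ] (ι → ℝ) →ₗ[ℝ] ℝ)
    (haD_symm : ∀ u v, aD u v = aD v u) (haD_psd : ∀ v, 0 ≤ aD v v)
    (Cn α₂ α₃ α₄ : ℝ)
    (hCn : 0 ≤ Cn) (hα₂ : 0 ≤ α₂) (hα₃ : 0 ≤ α₃) (hα₄ : 0 ≤ α₄)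
    (c₀ c₁ s₀ s₁ : ι → ℝ) (hs₁ : ∀ i, 0 ≤ s₁ i)
    (E : (ι → ℝ) → (ι → ℝ) → ℝ)
    (hE : ∀ c s, E c s =
      (∑ i, Φ (c i)) + Cn ^ 2 / 2 * aD c c + α₂ * ∑ i, Ψ (s i)
        - α₃ * ∑ i, Φ (c i) * s i + α₄ * ∑ i, (c i) ^ 2 * s i)
    (hscheme :
      (∑ i, (deriv Φp (c₁ i) + deriv Φm (c₀ i)) * (c₁ i - c₀ i))
        - α₃ * (∑ i, (deriv Φp (c₀ i) + deriv Φm (c₁ i)) * (s₁ i * (c₁ i - c₀ i)))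
        + α₂ * (∑ i, deriv Ψ (s₁ i) * (s₁ i - s₀ i))
        + Cn ^ 2 * aD c₁ (c₁ - c₀)
        - α₃ * (∑ i, Φ (c₀ i) * (s₁ i - s₀ i))
        + α₄ * (∑ i, s₁ i * ((c₁ i) ^ 2 - (c₀ i) ^ 2))
        + α₄ * (∑ i, (s₁ i - s₀ i) * (c₀ i) ^ 2) ≤ 0) :
    E c₁ s₁ ≤ E c₀ s₀ := by

  have conc_upper : ∀ {f : ℝ → ℝ}, ConcaveOn ℝ Set.univ f → Differentiable ℝ f →
      ∀ a b : ℝ, f b - f a ≤ deriv f a * (b - a) := by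
    intro f hc hd a b
    have h := conv_lower hc.neg hd.neg a b
    simp only [Pi.neg_def, deriv.fun_neg] at h
    linarith
  have conc_lower : ∀ {f : ℝ → ℝ}, ConcaveOn ℝ Set.univ f → Differentiable ℝ f →
      ∀ a b : ℝ, deriv f b * (b - a) ≤ f b - f a := by
    intro f hc hd a b
    have h := conv_upper hc.neg hd.neg a b
    simp only [Pi.neg_def, deriv.fun_neg] at h
    linarith
  -- term 1
  have h1 : ∑ i, (Φ (c₁ i) - Φ (c₀ i)) ≤
      ∑ i, (deriv Φp (c₁ i) + deriv Φm (c₀ i)) * (c₁ i - c₀ i) := by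
    apply Finset.sum_le_sum
    intro i _
    have ha := conv_upper hΦp_conv hΦp_diff (c₀ i) (c₁ i)
    have hb := conc_upper hΦm_conc hΦm_diff (c₀ i) (c₁ i)
    rw [hΦ, hΦ]; nlinarith
  -- term for α₃ part
  have h2 : ∑ i, ((deriv Φp (c₀ i) + deriv Φm (c₁ i)) * (s₁ i * (c₁ i - c₀ i))
        + Φ (c₀ i) * (s₁ i - s₀ i)) ≤
      ∑ i, (Φ (c₁ i) * s₁ i - Φ (c₀ i) * s₀ i) := by
    apply Finset.sum_le_sum
    intro i _
    have ha := conv_lower hΦp_conv hΦp_diff (c₀ i) (c₁ i)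
    have hb := conc_lower hΦm_conc hΦm_diff (c₀ i) (c₁ i)
    have hs := hs₁ i
    rw [hΦ, hΦ]; nlinarith [mul_le_mul_of_nonneg_left (add_le_add ha hb) hs]
  -- Ψ term
  have h3 : ∑ i, (Ψ (s₁ i) - Ψ (s₀ i)) ≤ ∑ i, deriv Ψ (s₁ i) * (s₁ i - s₀ i) :=
    Finset.sum_le_sum fun i _ => conv_upper hΨ_conv hΨ_diff (s₀ i) (s₁ i)
  -- α₄ term (equality)
  have h4 : ∑ i, ((c₁ i) ^ 2 * s₁ i - (c₀ i) ^ 2 * s₀ i) =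
      (∑ i, s₁ i * ((c₁ i) ^ 2 - (c₀ i) ^ 2)) + ∑ i, (s₁ i - s₀ i) * (c₀ i) ^ 2 := by
    rw [← Finset.sum_add_distrib]
    apply Finset.sum_congr rfl
    intro i _; ring
  -- aD term
  have h5 : Cn ^ 2 / 2 * aD c₁ c₁ - Cn ^ 2 / 2 * aD c₀ c₀ ≤ Cn ^ 2 * aD c₁ (c₁ - c₀) := by
    have hexp : aD (c₁ - c₀) (c₁ - c₀) =
        aD c₁ c₁ - aD c₁ c₀ - aD c₀ c₁ + aD c₀ c₀ := by
      simp [map_sub, LinearMap.sub_apply]; ring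
    have hd : aD c₁ (c₁ - c₀) = aD c₁ c₁ - aD c₁ c₀ := by simp [map_sub]
    have hpsd := haD_psd (c₁ - c₀)
    have hsym := haD_symm c₀ c₁
    have hCn2 : (0:ℝ) ≤ Cn ^ 2 / 2 := by positivity
    nlinarith [mul_le_mul_of_nonneg_left hpsd hCn2]
  -- combine
  rw [hE, hE]
  have e1 : ∑ i, (Φ (c₁ i) - Φ (c₀ i)) = (∑ i, Φ (c₁ i)) - ∑ i, Φ (c₀ i) :=
    Finset.sum_sub_distrib _ _
  have e2 : ∑ i, ((deriv Φp (c₀ i) + deriv Φm (c₁ i)) * (s₁ i * (c₁ i - c₀ i))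
        + Φ (c₀ i) * (s₁ i - s₀ i)) =
      (∑ i, (deriv Φp (c₀ i) + deriv Φm (c₁ i)) * (s₁ i * (c₁ i - c₀ i)))
        + ∑ i, Φ (c₀ i) * (s₁ i - s₀ i) := Finset.sum_add_distrib
  have e3 : ∑ i, (Φ (c₁ i) * s₁ i - Φ (c₀ i) * s₀ i)
      = (∑ i, Φ (c₁ i) * s₁ i) - ∑ i, Φ (c₀ i) * s₀ i := Finset.sum_sub_distrib _ _
  have e4 : ∑ i, (Ψ (s₁ i) - Ψ (s₀ i)) = (∑ i, Ψ (s₁ i)) - ∑ i, Ψ (s₀ i) :=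
    Finset.sum_sub_distrib _ _
  have e5 : ∑ i, ((c₁ i) ^ 2 * s₁ i - (c₀ i) ^ 2 * s₀ i)
      = (∑ i, (c₁ i) ^ 2 * s₁ i) - ∑ i, (c₀ i) ^ 2 * s₀ i := Finset.sum_sub_distrib _ _
  rw [e1] at h1
  rw [e2, e3] at h2
  rw [e4] at h3
  rw [e5] at h4
  nlinarith [mul_le_mul_of_nonneg_left h2 hα₃, mul_le_mul_of_nonneg_left h3 hα₂]
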